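/- (i) If j∈A, then ⌊(φ−1)·(⌊φj⌋+1)⌋ = j. (ii) If j∈B, then ⌊φ·⌊(φ−1)j⌋⌋ + 1 = j. (Consequently, the map q with q(0)=0, q(j)=⌊φj⌋+1 for j∈A, q(j)=⌊(φ−1)j⌋ for j∈B is an involution of ℤ≥0.) -/

import Mathlib

/-- The golden ratio φ = (1 + √5)/2. -/
noncomputable def phi : ℝ := (1 + Real.sqrt 5) / 2

/-- The lower Wythoff sequence a(n) = ⌊nφ⌋. -/
noncomputable def wa (n : ℕ) : ℕ := ⌊(n : ℝ) * phi⌋₊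

/-- The upper Wythoff sequence b(n) = ⌊nφ²⌋. -/
noncomputable def wb (n : ℕ) : ℕ := ⌊(n : ℝ) * phi ^ 2⌋₊

/-- A = range of the lower Wythoff sequence. -/
def WA : Set ℕ := {m | ∃ n : ℕ, 0 < n ∧ wa n = m}

/-- B = range of the upper Wythoff sequence. -/
def WB : Set ℕ := {m | ∃ n : ℕ, 0 < n ∧ wb n = m}

open scoped Classical in
/-- q(0) = 0, q(j) = ⌊φj⌋+1 if j ∈ A, q(j) = ⌊(φ−1)j⌋ if j ∈ B. -/
noncomputable def q (j : ℕ) : ℕ :=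
  if j = 0 then 0
  else if j ∈ WA then wa j + 1
  else ⌊(phi - 1) * (j : ℝ)⌋₊

lemma sqrt5_sq : Real.sqrt 5 ^ 2 = 5 := Real.sq_sqrt (by norm_num)

lemma one_lt_phi : 1 < phi := by
  unfold phi; nlinarith [Real.sqrt_nonneg 5, sqrt5_sq]

lemma phi_lt_two : phi < 2 := by
  unfold phi; nlinarith [Real.sqrt_nonneg 5, sqrt5_sq]

lemma phi_sq : phi ^ 2 = phi + 1 := by
  unfold phi; nlinarith [sqrt5_sq]

lemma irr_phi : Irrational phi := Real.goldenRatio_irrational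

lemma nphi_ne (j : ℕ) (hj : 0 < j) (m : ℕ) : (j : ℝ) * phi ≠ (m : ℝ) :=
  (irr_phi.natCast_mul (by omega)).ne_nat m

lemma wa_lt (n : ℕ) (hn : 0 < n) : (wa n : ℝ) < (n : ℝ) * phi := by
  refine lt_of_le_of_ne (Nat.floor_le ?_) (Ne.symm (nphi_ne n hn _))
  have := one_lt_phi
  have : (0:ℝ) ≤ (n:ℝ) := Nat.cast_nonneg n
  nlinarith [one_lt_phi]

lemma wa_gt (n : ℕ) : (n : ℝ) * phi < (wa n : ℝ) + 1 := by
  exact Nat.lt_floor_add_one ((n : ℝ) * phi)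

lemma phi_pos : 0 < phi := by linarith [one_lt_phi]

lemma wa_pos (n : ℕ) (hn : 0 < n) : 0 < wa n := by
  have h2 : (1:ℝ) ≤ (n:ℝ) := by exact_mod_cast hn
  exact Nat.lt_of_lt_of_le Nat.zero_lt_one
    (Nat.le_floor (by push_cast; nlinarith [one_lt_phi]))

lemma wb_eq (n : ℕ) : wb n = wa n + n := by
  unfold wb wa
  have h : (n : ℝ) * phi ^ 2 = (n : ℝ) * phi + (n : ℕ) := by rw [phi_sq]; ring
  rw [h, Nat.floor_add_natCast]
  have h2 : (0:ℝ) ≤ (n:ℝ) := Nat.cast_nonneg n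
  nlinarith [one_lt_phi]

/-- Key bounds: φ·(wa n) lies in [wa n + n - 1, wa n + n). -/
lemma bndA (n : ℕ) (hn : 0 < n) :
    (wa n : ℝ) + (n : ℝ) - 1 + (2 - phi) < (wa n : ℝ) * phi ∧
      (wa n : ℝ) * phi < (wa n : ℝ) + (n : ℝ) := by
  set d : ℝ := (n : ℝ) * phi - (wa n : ℝ) with hd
  have hd0 : 0 < d := by have := wa_lt n hn; simp [hd]; linarith
  have hd1 : d < 1 := by have := wa_gt n; simp [hd]; linarith
  have hkey : (wa n : ℝ) * phi = (wa n : ℝ) + (n : ℝ) - d * (phi - 1) := by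
    have h1 : (wa n : ℝ) = (n : ℝ) * phi - d := by simp [hd]
    rw [h1]; nlinarith [phi_sq]
  constructor <;> nlinarith [one_lt_phi, phi_lt_two]

/-- Key bounds: (φ−1)·(wb n) lies in [wa n, wa n + 1). -/
lemma bndB (n : ℕ) (hn : 0 < n) :
    (wa n : ℝ) ≤ (phi - 1) * (wb n : ℝ) ∧ (phi - 1) * (wb n : ℝ) < (wa n : ℝ) + 1 := by
  set d : ℝ := (n : ℝ) * phi - (wa n : ℝ) with hd
  have hd0 : 0 < d := by have := wa_lt n hn; simp [hd]; linarith
  have hd1 : d < 1 := by have := wa_gt n; simp [hd]; linarith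
  have hb : (wb n : ℝ) = (wa n : ℝ) + (n : ℝ) := by rw [wb_eq]; push_cast; ring
  have hkey : (phi - 1) * (wb n : ℝ) = (wa n : ℝ) + d * (2 - phi) := by
    rw [hb]
    have h1 : (wa n : ℝ) = (n : ℝ) * phi - d := by simp [hd]
    rw [h1]; nlinarith [phi_sq]
  constructor <;> nlinarith [one_lt_phi, phi_lt_two]

/-- Key bounds: φ·(wb n) lies in (2·wa n + n, 2·wa n + n + (2−φ)). -/
lemma bndB2 (n : ℕ) (hn : 0 < n) :
    (2 * (wa n : ℝ) + (n : ℝ)) < (wb n : ℝ) * phi ∧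
      (wb n : ℝ) * phi < 2 * (wa n : ℝ) + (n : ℝ) + (2 - phi) := by
  set d : ℝ := (n : ℝ) * phi - (wa n : ℝ) with hd
  have hd0 : 0 < d := by have := wa_lt n hn; simp [hd]; linarith
  have hd1 : d < 1 := by have := wa_gt n; simp [hd]; linarith
  have hb : (wb n : ℝ) = (wa n : ℝ) + (n : ℝ) := by rw [wb_eq]; push_cast; ring
  have hkey : (wb n : ℝ) * phi = 2 * (wa n : ℝ) + (n : ℝ) + d * (2 - phi) := by
    rw [hb]
    have h1 : (wa n : ℝ) = (n : ℝ) * phi - d := by simp [hd]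
    rw [h1]; nlinarith [phi_sq]
  constructor <;> nlinarith [one_lt_phi, phi_lt_two]

lemma wa_wa (n : ℕ) (hn : 0 < n) : wa (wa n) + 1 = wb n := by
  obtain ⟨hl, hr⟩ := bndA n hn
  have hwb : wb n = wa n + n := wb_eq n
  obtain ⟨m, hm⟩ : ∃ m, wa n + n = m + 1 := ⟨wa n + n - 1, by omega⟩
  have hmr : ((m : ℝ)) = (wa n : ℝ) + (n : ℝ) - 1 := by
    have : ((wa n + n : ℕ) : ℝ) = ((m + 1 : ℕ) : ℝ) := by rw [hm]
    push_cast at this; linarith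
  have : wa (wa n) = m := by
    show ⌊(wa n : ℝ) * phi⌋₊ = m
    rw [Nat.floor_eq_iff (mul_nonneg (Nat.cast_nonneg _) (le_of_lt phi_pos))]
    push_cast
    constructor
    · linarith [phi_lt_two]
    · linarith
  omega

lemma B1 (n : ℕ) (hn : 0 < n) : ⌊(phi - 1) * (wb n : ℝ)⌋₊ = wa n := by
  obtain ⟨hl, hr⟩ := bndB n hn
  rw [Nat.floor_eq_iff (by linarith [Nat.cast_nonneg (α := ℝ) (wa n)])]
  exact ⟨hl, by push_cast; linarith⟩

/-- frac(jφ) > 2 − φ for j ∈ A. -/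
lemma fracA (j : ℕ) (hj : j ∈ WA) : 2 - phi < (j : ℝ) * phi - (wa j : ℝ) := by
  obtain ⟨n, hn, rfl⟩ := hj
  obtain ⟨hl, hr⟩ := bndA n hn
  have h := wa_wa n hn
  have hwb := wb_eq n
  have : (wa (wa n) : ℝ) = (wa n : ℝ) + (n : ℝ) - 1 := by
    have : ((wa (wa n) + 1 : ℕ) : ℝ) = ((wa n + n : ℕ) : ℝ) := by rw [h, hwb]
    push_cast at this; linarith
  linarith [phi_lt_two]

/-- frac(jφ) < 2 − φ for j ∈ B. -/
lemma fracB (j : ℕ) (hj : j ∈ WB) : (j : ℝ) * phi - (wa j : ℝ) < 2 - phi := by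
  obtain ⟨n, hn, rfl⟩ := hj
  obtain ⟨hl, hr⟩ := bndB2 n hn
  have : wa (wb n) = 2 * wa n + n := by
    show ⌊(wb n : ℝ) * phi⌋₊ = 2 * wa n + n
    rw [Nat.floor_eq_iff (mul_nonneg (Nat.cast_nonneg _) (le_of_lt phi_pos))]
    push_cast
    exact ⟨by linarith, by nlinarith [one_lt_phi, phi_lt_two]⟩
  rw [this]
  push_cast
  linarith

lemma disjAB (j : ℕ) (hA : j ∈ WA) (hB : j ∈ WB) : False := by
  have h1 := fracA j hA
  have h2 := fracB j hB
  linarith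

lemma mem_A_or_B (j : ℕ) (hj : 0 < j) : j ∈ WA ∨ j ∈ WB := by
  set n : ℕ := ⌊(phi - 1) * ((j : ℝ) + 1)⌋₊ with hn
  have hphi1 : 0 < phi - 1 := by linarith [one_lt_phi]
  have hnle : (n : ℝ) ≤ (phi - 1) * ((j : ℝ) + 1) := Nat.floor_le (by positivity)
  have hnne : (phi - 1) * ((j : ℝ) + 1) ≠ (n : ℝ) := by
    intro h
    have : ((j + 1 : ℕ) : ℝ) * phi = ((n + j + 1 : ℕ) : ℝ) := by push_cast; nlinarith
    exact nphi_ne (j + 1) (by omega) (n + j + 1) this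
  have hnlt : (n : ℝ) < (phi - 1) * ((j : ℝ) + 1) := lt_of_le_of_ne hnle (Ne.symm hnne)
  have hngt : (phi - 1) * ((j : ℝ) + 1) < (n : ℝ) + 1 := by
    simpa using Nat.lt_floor_add_one ((phi - 1) * ((j : ℝ) + 1))
  have hjne : (phi - 1) * (j : ℝ) ≠ (n : ℝ) := by
    intro h
    have : (j : ℝ) * phi = ((n + j : ℕ) : ℝ) := by push_cast; nlinarith
    exact nphi_ne j hj (n + j) this
  by_cases hc : (phi - 1) * (j : ℝ) < (n : ℝ)
  · left
    have hn0 : 0 < n := by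
      rcases Nat.eq_zero_or_pos n with h0 | h0
      · exfalso
        rw [h0] at hc hnlt hngt
        simp at hc hnlt hngt
        have hj1 : (1 : ℝ) ≤ (j : ℝ) := by exact_mod_cast hj
        nlinarith [phi_lt_two, one_lt_phi]
      · exact h0
    refine ⟨n, hn0, ?_⟩
    show ⌊(n : ℝ) * phi⌋₊ = j
    rw [Nat.floor_eq_iff (mul_nonneg (Nat.cast_nonneg _) (le_of_lt phi_pos))]
    constructor
    · -- j ≤ n * phi, from (phi-1)*j < n, multiply by phi
      nlinarith [phi_sq, one_lt_phi]
    · -- n * phi < j + 1, from n < (phi-1)*(j+1)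
      push_cast
      nlinarith [phi_sq, one_lt_phi]
  · right
    push_neg at hc
    have hc' : (n : ℝ) < (phi - 1) * (j : ℝ) := lt_of_le_of_ne hc (Ne.symm hjne)
    have hnj : n < j := by
      have hjr : (0:ℝ) < (j:ℝ) := by exact_mod_cast hj
      have : (n : ℝ) < (j : ℝ) := by nlinarith [phi_lt_two]
      exact_mod_cast this
    refine ⟨j - n, by omega, ?_⟩
    have hm : ((j - n : ℕ) : ℝ) = (j : ℝ) - (n : ℝ) := by
      push_cast [Nat.cast_sub (le_of_lt hnj)]; ring
    show ⌊((j - n : ℕ) : ℝ) * phi ^ 2⌋₊ = j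
    rw [Nat.floor_eq_iff (mul_nonneg (Nat.cast_nonneg _) (by positivity))]
    rw [hm]
    constructor
    · -- j ≤ (j - n) * phi^2, from n < (phi-1)*j
      nlinarith [phi_sq, one_lt_phi]
    · -- (j - n) * phi^2 < j + 1, from (phi-1)*(j+1) < n + 1
      push_cast
      nlinarith [phi_sq, one_lt_phi]

theorem stmt_19 :
    (∀ j : ℕ, j ∈ WA → ⌊(phi - 1) * ((wa j : ℝ) + 1)⌋ = (j : ℤ)) ∧
    (∀ j : ℕ, j ∈ WB → ⌊phi * (⌊(phi - 1) * (j : ℝ)⌋ : ℝ)⌋ + 1 = (j : ℤ)) ∧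
    (∀ j : ℕ, q (q j) = j) := by
  have part1 : ∀ j : ℕ, j ∈ WA → ⌊(phi - 1) * ((wa j : ℝ) + 1)⌋ = (j : ℤ) := by
    intro j hj
    have hj0 : 0 < j := by
      obtain ⟨n, hn, rfl⟩ := hj
      exact wa_pos n hn
    have h1 := wa_lt j hj0
    have h2 := wa_gt j
    rw [Int.floor_eq_iff]
    push_cast
    constructor
    · nlinarith [phi_sq, one_lt_phi]
    · nlinarith [phi_sq, one_lt_phi]
  have part2 : ∀ j : ℕ, j ∈ WB → ⌊phi * (⌊(phi - 1) * (j : ℝ)⌋ : ℝ)⌋ + 1 = (j : ℤ) := by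
    intro j hj
    obtain ⟨n, hn, rfl⟩ := hj
    obtain ⟨hl, hr⟩ := bndB n hn
    have hin : ⌊(phi - 1) * ((wb n : ℕ) : ℝ)⌋ = (wa n : ℤ) := by
      rw [Int.floor_eq_iff]
      push_cast
      exact ⟨hl, by linarith⟩
    rw [hin]
    obtain ⟨hl2, hr2⟩ := bndA n hn
    have hwb : ((wb n : ℕ) : ℝ) = (wa n : ℝ) + (n : ℝ) := by rw [wb_eq]; push_cast; ring
    have hout : ⌊phi * ((wa n : ℤ) : ℝ)⌋ = (wa n : ℤ) + (n : ℤ) - 1 := by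
      rw [Int.floor_eq_iff]
      push_cast
      constructor
      · linarith [phi_lt_two]
      · linarith [phi_lt_two]
    rw [hout]
    have : (wb n : ℤ) = (wa n : ℤ) + (n : ℤ) := by exact_mod_cast wb_eq n
    omega
  refine ⟨part1, part2, ?_⟩
  intro j
  rcases Nat.eq_zero_or_pos j with rfl | hj0
  · simp [q]
  rcases mem_A_or_B j hj0 with hA | hB
  · obtain ⟨n, hn, hjn⟩ := hA
    have hA' : j ∈ WA := ⟨n, hn, hjn⟩
    have hq1 : q j = wb n := by
      rw [q, if_neg (by omega), if_pos hA']
      rw [← hjn, wa_wa n hn]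
    have hwbB : wb n ∈ WB := ⟨n, hn, rfl⟩
    have hwbnA : wb n ∉ WA := fun h => disjAB _ h hwbB
    have hwb0 : wb n ≠ 0 := by
      have := wa_pos n hn
      have := wb_eq n
      omega
    rw [hq1, q, if_neg hwb0, if_neg hwbnA, B1 n hn, hjn]
  · obtain ⟨n, hn, hjn⟩ := hB
    have hB' : j ∈ WB := ⟨n, hn, hjn⟩
    have hnA : j ∉ WA := fun h => disjAB _ h hB'
    have hq1 : q j = wa n := by
      rw [q, if_neg (by omega), if_neg hnA, ← hjn, B1 n hn]
    have hwaA : wa n ∈ WA := ⟨n, hn, rfl⟩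
    have hwa0 : wa n ≠ 0 := by have := wa_pos n hn; omega
    rw [hq1, q, if_neg hwa0, if_pos hwaA, wa_wa n hn, hjn]
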